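/- Let P : E → F be a continuous n-homogeneous polynomial between Banach spaces and let P̌ be its associated symmetric n-linear mapping. Then P is almost p-summing at every point of E if and only if P̌ is almost p-summing at every point of E × ... × E (n copies). -/

import Mathlib

open MeasureTheory Filter Finset

/-- The weak ℓ_q norm of a finite family: `sup_{‖φ‖≤1} (∑ |φ x_j|^q)^{1/q}`. -/
noncomputable def weakNorm {E : Type*} [NormedAddCommGroup E] [NormedSpace ℝ E]
    (q : ℝ) {k : ℕ} (x : Fin k → E) : ℝ :=
  sSup {s : ℝ | ∃ φ : E →L[ℝ] ℝ, ‖φ‖ ≤ 1 ∧ s = (∑ j, |φ (x j)| ^ q) ^ (1 / q)}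

/-- The weak ℓ_q norm of a sequence. -/
noncomputable def weakNormSeq {E : Type*} [NormedAddCommGroup E] [NormedSpace ℝ E]
    (q : ℝ) (x : ℕ → E) : ℝ :=
  sSup {s : ℝ | ∃ φ : E →L[ℝ] ℝ, ‖φ‖ ≤ 1 ∧ s = (∑' j, |φ (x j)| ^ q) ^ (1 / q)}

/-- Unconditionally q-summable sequences: weakly q-summable with weak norms of tails → 0. -/
def UncondSummable {E : Type*} [NormedAddCommGroup E] [NormedSpace ℝ E]
    (q : ℝ) (x : ℕ → E) : Prop :=
  (∀ φ : E →L[ℝ] ℝ, Summable fun j => |φ (x j)| ^ q) ∧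
    Tendsto (fun m => weakNormSeq q fun j => x (j + m)) atTop (nhds 0)

/-- The Rademacher functions on [0,1]. -/
noncomputable def rademacher (j : ℕ) (t : ℝ) : ℝ :=
  if Int.fract ((2 : ℝ) ^ j * t) < 1 / 2 then 1 else -1

/-- `(∫_0^1 ‖∑_j r_j(t) y_j‖² dt)^{1/2}` for a finite family `y` in `F`. -/
noncomputable def radNorm {F : Type*} [NormedAddCommGroup F] [NormedSpace ℝ F]
    {k : ℕ} (y : Fin k → F) : ℝ :=
  (∫ t in (0:ℝ)..1, ‖∑ j : Fin k, rademacher (j : ℕ) t • y j‖ ^ 2) ^ ((1:ℝ) / 2)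

/-- `f` is almost p-summing at `a`. -/
def AlmostSummingAt {E F : Type*} [NormedAddCommGroup E] [NormedSpace ℝ E]
    [NormedAddCommGroup F] [NormedSpace ℝ F] (p : ℝ) (f : E → F) (a : E) : Prop :=
  ∃ C > 0, ∃ ε > 0, ∃ r > 0, ∀ (k : ℕ) (x : Fin k → E), weakNorm p x < ε →
    radNorm (fun j => f (a + x j) - f a) ≤ C * weakNorm p x ^ r

/-- `f` is absolutely (p,q)-summing at `a`. -/
def AbsSummingAt {E F : Type*} [NormedAddCommGroup E] [NormedSpace ℝ E]
    [NormedAddCommGroup F] [NormedSpace ℝ F] (p q : ℝ) (f : E → F) (a : E) : Prop :=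
  ∃ M > 0, ∃ δ > 0, ∃ r > 0, ∀ (k : ℕ) (x : Fin k → E), weakNorm q x < δ →
    (∑ j, ‖f (a + x j) - f a‖ ^ p) ≤ M * weakNorm q x ^ r


section WN
variable {E G : Type*} [NormedAddCommGroup E] [NormedSpace ℝ E]
  [NormedAddCommGroup G] [NormedSpace ℝ G]

lemma wn_nonneg (q : ℝ) {k : ℕ} (x : Fin k → E) : 0 ≤ weakNorm q x := by
  apply Real.sSup_nonneg
  rintro s ⟨φ, hφ, rfl⟩
  exact Real.rpow_nonneg (Finset.sum_nonneg fun j _ => Real.rpow_nonneg (abs_nonneg _) _) _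

lemma wn_bddAbove {q : ℝ} (hq : 0 ≤ q) {k : ℕ} (x : Fin k → E) :
    BddAbove {s : ℝ | ∃ φ : E →L[ℝ] ℝ, ‖φ‖ ≤ 1 ∧ s = (∑ j, |φ (x j)| ^ q) ^ (1 / q)} := by
  refine ⟨(∑ j, ‖x j‖ ^ q) ^ (1 / q), ?_⟩
  rintro s ⟨φ, hφ, rfl⟩
  refine Real.rpow_le_rpow (Finset.sum_nonneg fun j _ => Real.rpow_nonneg (abs_nonneg _) _)
    (Finset.sum_le_sum fun j _ => Real.rpow_le_rpow (abs_nonneg _) ?_ hq) (by positivity)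
  calc |φ (x j)| = ‖φ (x j)‖ := (Real.norm_eq_abs _).symm
    _ ≤ ‖φ‖ * ‖x j‖ := φ.le_opNorm _
    _ ≤ 1 * ‖x j‖ := mul_le_mul_of_nonneg_right hφ (norm_nonneg _)
    _ = ‖x j‖ := one_mul _

lemma le_wn {q : ℝ} (hq : 0 ≤ q) {k : ℕ} (x : Fin k → E) (φ : E →L[ℝ] ℝ) (hφ : ‖φ‖ ≤ 1) :
    (∑ j, |φ (x j)| ^ q) ^ (1 / q) ≤ weakNorm q x :=
  le_csSup (wn_bddAbove hq x) ⟨φ, hφ, rfl⟩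

lemma wn_comp {q : ℝ} (hq : 0 ≤ q) {k : ℕ} (x : Fin k → E) (u : E →L[ℝ] G) (hu : ‖u‖ ≤ 1) :
    weakNorm q (fun j => u (x j)) ≤ weakNorm q x := by
  refine Real.sSup_le ?_ (wn_nonneg q x)
  rintro s ⟨φ, hφ, rfl⟩
  have hn : ‖φ.comp u‖ ≤ 1 := by
    calc ‖φ.comp u‖ ≤ ‖φ‖ * ‖u‖ := φ.opNorm_comp_le u
      _ ≤ 1 * 1 := mul_le_mul hφ hu (norm_nonneg _) zero_le_one
      _ = 1 := one_mul 1
  exact le_wn hq x (φ.comp u) hn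

lemma wn_add {q : ℝ} (hq : 1 ≤ q) {k : ℕ} (x y : Fin k → E) :
    weakNorm q (fun j => x j + y j) ≤ weakNorm q x + weakNorm q y := by
  have hq0 : (0:ℝ) ≤ q := le_trans zero_le_one hq
  refine Real.sSup_le ?_ (add_nonneg (wn_nonneg _ _) (wn_nonneg _ _))
  rintro s ⟨φ, hφ, rfl⟩
  have h1 : (∑ j, |φ (x j + y j)| ^ q) ^ (1 / q)
      = (∑ j, |φ (x j) + φ (y j)| ^ q) ^ (1 / q) := by simp [map_add]
  rw [h1]
  calc (∑ j, |φ (x j) + φ (y j)| ^ q) ^ (1 / q)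
      ≤ (∑ j, |φ (x j)| ^ q) ^ (1 / q) + (∑ j, |φ (y j)| ^ q) ^ (1 / q) :=
        Real.Lp_add_le Finset.univ _ _ hq
    _ ≤ weakNorm q x + weakNorm q y := add_le_add (le_wn hq0 x φ hφ) (le_wn hq0 y φ hφ)

lemma wn_zero {q : ℝ} (hq : 0 < q) {k : ℕ} :
    weakNorm q (fun _ : Fin k => (0:E)) = 0 := by
  apply le_antisymm _ (wn_nonneg _ _)
  refine Real.sSup_le ?_ le_rfl
  rintro s ⟨φ, hφ, rfl⟩
  simp [Real.zero_rpow hq.ne', one_div, Real.zero_rpow (inv_ne_zero hq.ne')]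

lemma wn_sum {q : ℝ} (hq : 1 ≤ q) {k : ℕ} {ι : Type*} (s : Finset ι) (x : ι → Fin k → E) :
    weakNorm q (fun j => ∑ i ∈ s, x i j) ≤ ∑ i ∈ s, weakNorm q (x i) := by
  induction s using Finset.cons_induction with
  | empty => simp [wn_zero (lt_of_lt_of_le zero_lt_one hq)]
  | cons a s ha ih =>
      simp only [Finset.sum_cons]
      exact le_trans (wn_add hq _ _) (add_le_add le_rfl ih)
end WN

section RN
variable {F : Type*} [NormedAddCommGroup F] [NormedSpace ℝ F]

lemma rademacher_measurable (j : ℕ) : Measurable (rademacher j) := by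
  unfold rademacher
  have h : Measurable fun t : ℝ => Int.fract ((2:ℝ)^j * t) :=
    measurable_fract.comp (measurable_id.const_mul _)
  exact Measurable.ite (measurableSet_lt h measurable_const) measurable_const measurable_const

lemma rademacher_abs_le (j : ℕ) (t : ℝ) : |rademacher j t| ≤ 1 := by
  unfold rademacher; split <;> norm_num

lemma radAux_sm {k : ℕ} (y : Fin k → F) :
    StronglyMeasurable fun t => ∑ j : Fin k, rademacher (j : ℕ) t • y j := by
  apply Finset.stronglyMeasurable_fun_sum
  intro j _
  exact ((rademacher_measurable (j : ℕ)).stronglyMeasurable).smul_const (y j)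

lemma radAux_sq_sm {k : ℕ} (y : Fin k → F) :
    StronglyMeasurable fun t => ‖∑ j : Fin k, rademacher (j : ℕ) t • y j‖ ^ 2 :=
  ((radAux_sm y).norm).pow 2

lemma radAux_bound {k : ℕ} (y : Fin k → F) (t : ℝ) :
    ‖∑ j : Fin k, rademacher (j : ℕ) t • y j‖ ^ 2 ≤ (∑ j : Fin k, ‖y j‖) ^ 2 := by
  have h1 : ‖∑ j : Fin k, rademacher (j : ℕ) t • y j‖ ≤ ∑ j : Fin k, ‖y j‖ := by
    refine le_trans (norm_sum_le _ _) (Finset.sum_le_sum fun j _ => ?_)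
    rw [norm_smul, Real.norm_eq_abs]
    calc |rademacher (j:ℕ) t| * ‖y j‖ ≤ 1 * ‖y j‖ :=
      mul_le_mul_of_nonneg_right (rademacher_abs_le _ _) (norm_nonneg _)
    _ = ‖y j‖ := one_mul _
  exact pow_le_pow_left₀ (norm_nonneg _) h1 2

lemma radAux_intIntegrable {k : ℕ} (y : Fin k → F) :
    IntervalIntegrable (fun t => ‖∑ j : Fin k, rademacher (j : ℕ) t • y j‖ ^ 2)
      MeasureTheory.volume 0 1 := by
  rw [intervalIntegrable_iff_integrableOn_Ioc_of_le (zero_le_one)]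
  refine Integrable.mono' (g := fun _ => (∑ j : Fin k, ‖y j‖) ^ 2)
    (integrableOn_const measure_Ioc_lt_top.ne)
    (radAux_sq_sm y).aestronglyMeasurable (ae_of_all _ fun t => ?_)
  rw [Real.norm_eq_abs, abs_of_nonneg (by positivity)]
  exact radAux_bound y t

lemma radAux_int_nonneg {k : ℕ} (y : Fin k → F) :
    0 ≤ ∫ t in (0:ℝ)..1, ‖∑ j : Fin k, rademacher (j : ℕ) t • y j‖ ^ 2 :=
  intervalIntegral.integral_nonneg zero_le_one fun t _ => by positivity

lemma radNorm_nonneg {k : ℕ} (y : Fin k → F) : 0 ≤ radNorm y :=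
  Real.rpow_nonneg (radAux_int_nonneg y) _

lemma radNorm_eq_sqrt {k : ℕ} (y : Fin k → F) :
    radNorm y = Real.sqrt (∫ t in (0:ℝ)..1, ‖∑ j : Fin k, rademacher (j : ℕ) t • y j‖ ^ 2) :=
  (Real.sqrt_eq_rpow _).symm

lemma sqrt_sum_le {ι : Type*} (s : Finset ι) (a : ι → ℝ) (ha : ∀ i ∈ s, 0 ≤ a i) :
    Real.sqrt (∑ i ∈ s, a i) ≤ ∑ i ∈ s, Real.sqrt (a i) := by
  induction s using Finset.cons_induction with
  | empty => simp
  | cons i s hi ih =>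
      rw [Finset.sum_cons, Finset.sum_cons]
      have h0 : 0 ≤ a i := ha i (Finset.mem_cons_self _ _)
      have hs : 0 ≤ ∑ j ∈ s, a j :=
        Finset.sum_nonneg fun j hj => ha j (Finset.mem_cons_of_mem hj)
      have h1 : a i + ∑ j ∈ s, a j ≤ (Real.sqrt (a i) + Real.sqrt (∑ j ∈ s, a j)) ^ 2 := by
        nlinarith [Real.sq_sqrt h0, Real.sq_sqrt hs, Real.sqrt_nonneg (a i),
          Real.sqrt_nonneg (∑ j ∈ s, a j)]
      calc Real.sqrt (a i + ∑ j ∈ s, a j)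
          ≤ Real.sqrt ((Real.sqrt (a i) + Real.sqrt (∑ j ∈ s, a j)) ^ 2) := Real.sqrt_le_sqrt h1
        _ = Real.sqrt (a i) + Real.sqrt (∑ j ∈ s, a j) :=
            Real.sqrt_sq (add_nonneg (Real.sqrt_nonneg _) (Real.sqrt_nonneg _))
        _ ≤ Real.sqrt (a i) + ∑ j ∈ s, Real.sqrt (a j) := by
            exact add_le_add le_rfl (ih fun j hj => ha j (Finset.mem_cons_of_mem hj))

set_option maxHeartbeats 1000000 in
/-- Key combination lemma. -/
lemma radNorm_combo {ι : Type*} [Fintype ι] {k : ℕ} (c : ι → ℝ) (u : ι → Fin k → F) :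
    radNorm (fun j => ∑ ε : ι, c ε • u ε j) ≤
      ∑ ε : ι, (Real.sqrt (Fintype.card ι) * |c ε|) * radNorm (u ε) := by
  set G : ι → ℝ → F := fun ε t => ∑ j : Fin k, rademacher (j : ℕ) t • u ε j with hG
  have hswap : ∀ t, (∑ j : Fin k, rademacher (j : ℕ) t • ∑ ε : ι, c ε • u ε j)
      = ∑ ε : ι, c ε • G ε t := by
    intro t
    calc (∑ j : Fin k, rademacher (j : ℕ) t • ∑ ε : ι, c ε • u ε j)
        = ∑ j : Fin k, ∑ ε : ι, c ε • (rademacher (j : ℕ) t • u ε j) := by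
          simp only [Finset.smul_sum]
          exact Finset.sum_congr rfl fun j _ =>
            Finset.sum_congr rfl fun ε _ => smul_comm _ _ _
      _ = ∑ ε : ι, ∑ j : Fin k, c ε • (rademacher (j : ℕ) t • u ε j) := Finset.sum_comm
      _ = ∑ ε : ι, c ε • G ε t := by
          refine Finset.sum_congr rfl fun ε _ => ?_
          rw [hG, Finset.smul_sum]
  have hpt : ∀ t, ‖∑ j : Fin k, rademacher (j : ℕ) t • ∑ ε : ι, c ε • u ε j‖ ^ 2
      ≤ (Fintype.card ι : ℝ) * ∑ ε : ι, (c ε) ^ 2 * ‖G ε t‖ ^ 2 := by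
    intro t
    rw [hswap t]
    calc ‖∑ ε : ι, c ε • G ε t‖ ^ 2 ≤ (∑ ε : ι, ‖c ε • G ε t‖) ^ 2 := by
          exact pow_le_pow_left₀ (norm_nonneg _) (norm_sum_le _ _) 2
      _ ≤ (Fintype.card ι : ℝ) * ∑ ε : ι, ‖c ε • G ε t‖ ^ 2 := by
          simpa [Finset.card_univ] using
            sq_sum_le_card_mul_sum_sq (s := Finset.univ) (f := fun ε : ι => ‖c ε • G ε t‖)
      _ = (Fintype.card ι : ℝ) * ∑ ε : ι, (c ε) ^ 2 * ‖G ε t‖ ^ 2 := by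
          congr 1
          refine Finset.sum_congr rfl fun ε _ => ?_
          rw [norm_smul, Real.norm_eq_abs, mul_pow, sq_abs]
  -- integral bound
  set I : ι → ℝ := fun ε => ∫ t in (0:ℝ)..1, ‖G ε t‖ ^ 2 with hI
  have hInn : ∀ ε, 0 ≤ I ε := fun ε => radAux_int_nonneg (u ε)
  have hint : (∫ t in (0:ℝ)..1, ‖∑ j : Fin k, rademacher (j : ℕ) t • ∑ ε : ι, c ε • u ε j‖ ^ 2)
      ≤ (Fintype.card ι : ℝ) * ∑ ε : ι, (c ε) ^ 2 * I ε := by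
    have hrhsInt : IntervalIntegrable
        (fun t => (Fintype.card ι : ℝ) * ∑ ε : ι, (c ε) ^ 2 * ‖G ε t‖ ^ 2)
        MeasureTheory.volume 0 1 := by
      have h0 : IntervalIntegrable (∑ ε : ι, fun t => (c ε) ^ 2 * ‖G ε t‖ ^ 2)
          MeasureTheory.volume 0 1 :=
        IntervalIntegrable.sum Finset.univ fun ε _ =>
          (radAux_intIntegrable (u ε)).const_mul ((c ε) ^ 2)
      have h1 : (∑ ε : ι, fun t => (c ε) ^ 2 * ‖G ε t‖ ^ 2)
          = fun t => ∑ ε : ι, (c ε) ^ 2 * ‖G ε t‖ ^ 2 := by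
        funext t; simp [Finset.sum_apply]
      rw [h1] at h0
      exact h0.const_mul ((Fintype.card ι : ℝ))
    calc (∫ t in (0:ℝ)..1, ‖∑ j : Fin k, rademacher (j : ℕ) t • ∑ ε : ι, c ε • u ε j‖ ^ 2)
        ≤ ∫ t in (0:ℝ)..1, (Fintype.card ι : ℝ) * ∑ ε : ι, (c ε) ^ 2 * ‖G ε t‖ ^ 2 := by
          exact intervalIntegral.integral_mono_on zero_le_one
            (radAux_intIntegrable _) hrhsInt (fun t _ => hpt t)
      _ = (Fintype.card ι : ℝ) * ∑ ε : ι, (c ε) ^ 2 * I ε := by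
          rw [intervalIntegral.integral_const_mul]
          congr 1
          rw [intervalIntegral.integral_finset_sum
            (fun ε _ => (radAux_intIntegrable (u ε)).const_mul _)]
          exact Finset.sum_congr rfl fun ε _ => intervalIntegral.integral_const_mul _ _
  -- take square roots
  rw [radNorm_eq_sqrt]
  calc Real.sqrt (∫ t in (0:ℝ)..1, ‖∑ j : Fin k, rademacher (j : ℕ) t • ∑ ε : ι, c ε • u ε j‖ ^ 2)
      ≤ Real.sqrt ((Fintype.card ι : ℝ) * ∑ ε : ι, (c ε) ^ 2 * I ε) := Real.sqrt_le_sqrt hint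
    _ = Real.sqrt (Fintype.card ι : ℝ) * Real.sqrt (∑ ε : ι, (c ε) ^ 2 * I ε) :=
        Real.sqrt_mul (by positivity) _
    _ ≤ Real.sqrt (Fintype.card ι : ℝ) * ∑ ε : ι, Real.sqrt ((c ε) ^ 2 * I ε) := by
        refine mul_le_mul_of_nonneg_left ?_ (Real.sqrt_nonneg _)
        exact sqrt_sum_le _ _ fun ε _ => mul_nonneg (sq_nonneg _) (hInn ε)
    _ = ∑ ε : ι, (Real.sqrt (Fintype.card ι) * |c ε|) * radNorm (u ε) := by
        rw [Finset.mul_sum]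
        refine Finset.sum_congr rfl fun ε _ => ?_
        rw [Real.sqrt_mul (sq_nonneg _), Real.sqrt_sq_eq_abs, radNorm_eq_sqrt, mul_assoc]
end RN

section Polar
variable {E F : Type*} [NormedAddCommGroup E] [NormedSpace ℝ E]
  [NormedAddCommGroup F] [NormedSpace ℝ F]

lemma filter_surj_card (n : ℕ) :
    (Finset.univ.filter (fun r : Fin n → Fin n => Function.Surjective r)).card = n.factorial := by
  classical
  have hcard : n.factorial = (Finset.univ : Finset (Equiv.Perm (Fin n))).card := by
    rw [Finset.card_univ, Fintype.card_perm, Fintype.card_fin]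
  rw [hcard]
  refine Finset.card_bij' (fun r hr => Equiv.ofBijective r
      ⟨Finite.injective_iff_surjective.mpr (Finset.mem_filter.mp hr).2,
        (Finset.mem_filter.mp hr).2⟩)
    (fun σ _ => ⇑σ) (fun r hr => Finset.mem_univ _) (fun σ _ => ?_) (fun r hr => rfl)
    (fun σ _ => Equiv.ext fun x => rfl)
  exact Finset.mem_filter.mpr ⟨Finset.mem_univ _, σ.surjective⟩

lemma sum_compl_indicator (n : ℕ) (R : Finset (Fin n)) :
    (∑ S : Finset (Fin n), if R ⊆ S then ((-1 : ℝ) ^ (n - S.card)) else 0)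
      = if R = Finset.univ then 1 else 0 := by
  classical
  rw [Finset.sum_ite, Finset.sum_const_zero, add_zero]
  have key : ∑ S ∈ Finset.univ.filter (fun S => R ⊆ S), ((-1 : ℝ) ^ (n - S.card))
      = ∑ U ∈ Rᶜ.powerset, ((-1 : ℝ) ^ U.card) := by
    refine Finset.sum_bij' (fun S _ => Sᶜ) (fun U _ => Uᶜ) ?_ ?_ ?_ ?_ ?_
    · intro S hS
      rw [Finset.mem_powerset]
      exact Finset.compl_subset_compl.mpr (Finset.mem_filter.mp hS).2
    · intro U hU
      refine Finset.mem_filter.mpr ⟨Finset.mem_univ _, ?_⟩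
      have := Finset.mem_powerset.mp hU
      calc R = Rᶜᶜ := (compl_compl R).symm
        _ ⊆ Uᶜ := Finset.compl_subset_compl.mpr this
    · intro S _; exact compl_compl S
    · intro U _; exact compl_compl U
    · intro S hS
      congr 1
      rw [Finset.card_compl, Fintype.card_fin]
  rw [key]
  have hz : ((∑ U ∈ Rᶜ.powerset, ((-1 : ℤ) ^ U.card) : ℤ) : ℝ)
      = ∑ U ∈ Rᶜ.powerset, ((-1 : ℝ) ^ U.card) := by push_cast; rfl
  rw [← hz, Finset.sum_powerset_neg_one_pow_card]
  have : (Rᶜ = ∅) = (R = Finset.univ) := by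
    simp [Finset.compl_eq_empty_iff]
  by_cases h : R = Finset.univ
  · simp [h]
  · have h2 : ¬ (Rᶜ = ∅) := by simpa [Finset.compl_eq_empty_iff] using h
    simp [h, h2]

lemma polarization {n : ℕ} (T : ContinuousMultilinearMap ℝ (fun _ : Fin n => E) F)
    (hsym : ∀ (σ : Equiv.Perm (Fin n)) (v : Fin n → E), T (v ∘ σ) = T v) (w : Fin n → E) :
    (n.factorial : ℝ) • T w =
      ∑ S : Finset (Fin n), ((-1 : ℝ) ^ (n - S.card)) • T (fun _ => ∑ i ∈ S, w i) := by
  classical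
  have step1 : ∀ S : Finset (Fin n), T (fun _ => ∑ i ∈ S, w i)
      = ∑ r ∈ Fintype.piFinset (fun _ : Fin n => S), T (fun i => w (r i)) := by
    intro S
    exact T.toMultilinearMap.map_sum_finset (fun _ j => w j) (fun _ => S)
  have hfilter : ∀ S : Finset (Fin n), Fintype.piFinset (fun _ : Fin n => S)
      = Finset.univ.filter (fun r : Fin n → Fin n => ∀ i, r i ∈ S) := by
    intro S; ext r; simp [Fintype.mem_piFinset]
  calc (n.factorial : ℝ) • T w
      = ∑ r ∈ Finset.univ.filter (fun r : Fin n → Fin n => Function.Surjective r),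
          T (fun i => w (r i)) := by
        rw [Finset.sum_congr rfl (fun r hr => ?_), Finset.sum_const, ← filter_surj_card n]
        · rw [Nat.cast_smul_eq_nsmul]
        · have hr2 : Function.Surjective r := (Finset.mem_filter.mp hr).2
          have hb : Function.Bijective r := ⟨Finite.injective_iff_surjective.mpr hr2, hr2⟩
          have := hsym (Equiv.ofBijective r hb) w
          exact this
    _ = ∑ r : Fin n → Fin n,
          (if Function.Surjective r then (1:ℝ) else 0) • T (fun i => w (r i)) := by
        rw [Finset.sum_filter]
        refine Finset.sum_congr rfl fun r _ => ?_
        by_cases h : Function.Surjective r <;> simp [h]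
    _ = ∑ r : Fin n → Fin n,
          (∑ S : Finset (Fin n), if ∀ i, r i ∈ S then ((-1 : ℝ) ^ (n - S.card)) else 0)
            • T (fun i => w (r i)) := by
        refine Finset.sum_congr rfl fun r _ => ?_
        congr 1
        have himg : ∀ S : Finset (Fin n), (∀ i, r i ∈ S) ↔ (Finset.image r Finset.univ ⊆ S) := by
          intro S
          constructor
          · intro h y hy
            obtain ⟨i, _, rfl⟩ := Finset.mem_image.mp hy
            exact h i
          · intro h i
            exact h (Finset.mem_image.mpr ⟨i, Finset.mem_univ _, rfl⟩)
        have hsurj : Function.Surjective r ↔ Finset.image r Finset.univ = Finset.univ := by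
          constructor
          · intro h
            apply Finset.eq_univ_of_forall
            intro y
            obtain ⟨i, rfl⟩ := h y
            exact Finset.mem_image.mpr ⟨i, Finset.mem_univ _, rfl⟩
          · intro h y
            have : y ∈ Finset.image r Finset.univ := by rw [h]; exact Finset.mem_univ y
            obtain ⟨i, _, rfl⟩ := Finset.mem_image.mp this
            exact ⟨i, rfl⟩
        rw [Finset.sum_congr rfl (fun S _ => by rw [if_congr (himg S) rfl rfl]),
          sum_compl_indicator n (Finset.image r Finset.univ)]
        simp [hsurj]
    _ = ∑ r : Fin n → Fin n, ∑ S : Finset (Fin n),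
          (if ∀ i, r i ∈ S then ((-1 : ℝ) ^ (n - S.card)) • T (fun i => w (r i)) else 0) := by
        refine Finset.sum_congr rfl fun r _ => ?_
        rw [Finset.sum_smul]
        refine Finset.sum_congr rfl fun S _ => ?_
        by_cases h : ∀ i, r i ∈ S <;> simp [h]
    _ = ∑ S : Finset (Fin n), ∑ r : Fin n → Fin n,
          (if ∀ i, r i ∈ S then ((-1 : ℝ) ^ (n - S.card)) • T (fun i => w (r i)) else 0) :=
        Finset.sum_comm
    _ = ∑ S : Finset (Fin n), ((-1 : ℝ) ^ (n - S.card)) • T (fun _ => ∑ i ∈ S, w i) := by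
        refine Finset.sum_congr rfl fun S _ => ?_
        rw [step1 S, hfilter S, Finset.sum_filter, Finset.smul_sum]
        exact (Finset.sum_congr rfl fun r _ => by
          by_cases h : ∀ i, r i ∈ S <;> simp [h]).symm

end Polar

lemma rpow_le_rpow_exp {w r s : ℝ} (hw0 : 0 ≤ w) (hw1 : w ≤ 1) (hr : 0 < r) (hrs : r ≤ s) :
    w ^ s ≤ w ^ r := by
  rcases eq_or_lt_of_le hw0 with h | h
  · rw [← h, Real.zero_rpow (by linarith : s ≠ 0), Real.zero_rpow hr.ne']
  · exact Real.rpow_le_rpow_of_exponent_ge h hw1 hrs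

lemma proj_norm_le {E : Type*} [NormedAddCommGroup E] [NormedSpace ℝ E] (n : ℕ) (i : Fin n) :
    ‖(ContinuousLinearMap.proj i : (Fin n → E) →L[ℝ] E)‖ ≤ 1 :=
  ContinuousLinearMap.opNorm_le_bound _ zero_le_one fun v => by
    simpa using norm_le_pi_norm v i

lemma diag_norm_le {E : Type*} [NormedAddCommGroup E] [NormedSpace ℝ E] (n : ℕ) :
    ‖(ContinuousLinearMap.pi (fun _ : Fin n => ContinuousLinearMap.id ℝ E) :
      E →L[ℝ] (Fin n → E))‖ ≤ 1 :=
  ContinuousLinearMap.opNorm_le_bound _ zero_le_one fun v => by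
    rw [one_mul]
    exact (pi_norm_le_iff_of_nonneg (norm_nonneg v)).mpr fun i => le_rfl

theorem stmt9 {E F : Type*} [NormedAddCommGroup E] [NormedSpace ℝ E]
    [NormedAddCommGroup F] [NormedSpace ℝ F]
    (p : ℝ) (hp : 1 ≤ p) (n : ℕ)
    (T : ContinuousMultilinearMap ℝ (fun _ : Fin n => E) F)
    (hsym : ∀ (σ : Equiv.Perm (Fin n)) (v : Fin n → E), T (v ∘ σ) = T v) :
    (∀ a : E, AlmostSummingAt p (fun x => T fun _ => x) a) ↔
      (∀ a : Fin n → E, AlmostSummingAt p (fun v => T v) a) := by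
  have hp0 : (0:ℝ) ≤ p := le_trans zero_le_one hp
  constructor
  · intro hP a
    classical
    have hch : ∀ S : Finset (Fin n), ∃ C > 0, ∃ ε > 0, ∃ r' : ℕ, r' > 0 ∧
        ∀ (k : ℕ) (x' : Fin k → E), weakNorm p x' < ε →
        radNorm (fun j => (fun x => T fun _ => x) ((∑ i ∈ S, a i) + x' j)
          - (fun x => T fun _ => x) (∑ i ∈ S, a i)) ≤ C * weakNorm p x' ^ r' :=
      fun S => hP (∑ i ∈ S, a i)
    choose Cf hCf εf hεf rf hrf hbound using hch
    have hne : (Finset.univ : Finset (Finset (Fin n))).Nonempty := ⟨∅, Finset.mem_univ ∅⟩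
    set ε₀ : ℝ := Finset.univ.inf' hne εf with hε₀
    have hε₀pos : 0 < ε₀ := by
      rw [hε₀, Finset.lt_inf'_iff]; exact fun S _ => hεf S
    set r : ℕ := Finset.univ.inf' hne rf with hrdef
    have hrpos : 0 < r := by rw [hrdef, Finset.lt_inf'_iff]; exact fun S _ => hrf S
    set R : ℕ := Finset.univ.sup' hne rf with hRdef
    set d : Finset (Fin n) → ℝ := fun S => ((-1 : ℝ) ^ (n - S.card)) / (n.factorial : ℝ) with hd
    set m : ℝ := Real.sqrt (Fintype.card (Finset (Fin n))) with hm
    set A : ℝ := (∑ S : Finset (Fin n), m * |d S| * Cf S) * ((n : ℝ) + 1) ^ R with hA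
    have hAnn : 0 ≤ A := mul_nonneg (Finset.sum_nonneg fun S _ =>
      mul_nonneg (mul_nonneg (by rw [hm]; exact Real.sqrt_nonneg _) (abs_nonneg _)) (hCf S).le)
      (by positivity)
    refine ⟨A + 1, by linarith, min ε₀ 1 / ((n:ℝ) + 1), by positivity, r, hrpos, ?_⟩
    intro k x hx
    set w := weakNorm p x with hwdef
    have hw0 : 0 ≤ w := wn_nonneg p x
    have hw1 : w ≤ 1 := by
      have h1 : min ε₀ 1 / ((n:ℝ)+1) ≤ min ε₀ 1 :=
        div_le_self (le_of_lt (lt_min hε₀pos one_pos)) (by push_cast; linarith)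
      have h2 := min_le_right ε₀ 1
      linarith
    have hproj : ∀ i : Fin n, weakNorm p (fun j => x j i) ≤ w := by
      intro i
      have heq : (fun j : Fin k => (ContinuousLinearMap.proj i : (Fin n → E) →L[ℝ] E) (x j))
          = fun j => x j i := by funext j; rfl
      rw [← heq, hwdef]
      exact wn_comp hp0 x _ (proj_norm_le n i)
    have hzw : ∀ S : Finset (Fin n), weakNorm p (fun j => ∑ i ∈ S, x j i) ≤ (n : ℝ) * w := by
      intro S
      calc weakNorm p (fun j => ∑ i ∈ S, x j i)
          ≤ ∑ i ∈ S, weakNorm p (fun j => x j i) := wn_sum hp S (fun i j => x j i)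
        _ ≤ ∑ _i ∈ S, w := Finset.sum_le_sum fun i _ => hproj i
        _ = (S.card : ℝ) * w := by rw [Finset.sum_const, nsmul_eq_mul]
        _ ≤ (n : ℝ) * w := by
            have hc : (S.card : ℝ) ≤ (n : ℝ) := by
              have h1 : S.card ≤ n := by simpa using Finset.card_le_univ S
              exact_mod_cast h1
            exact mul_le_mul_of_nonneg_right hc hw0
    have hzlt : ∀ S : Finset (Fin n), weakNorm p (fun j => ∑ i ∈ S, x j i) < εf S := by
      intro S
      have h2 : (n:ℝ) * w ≤ ((n:ℝ)+1) * w := by nlinarith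
      have h3 : ((n:ℝ)+1) * w < ((n:ℝ)+1) * (min ε₀ 1 / ((n:ℝ)+1)) :=
        mul_lt_mul_of_pos_left hx (by positivity)
      have h4 : ((n:ℝ)+1) * (min ε₀ 1 / ((n:ℝ)+1)) = min ε₀ 1 := mul_div_cancel₀ _ (by positivity)
      have h5 : ε₀ ≤ εf S := Finset.inf'_le εf (Finset.mem_univ S)
      have h6 := min_le_left ε₀ 1
      have h7 := hzw S
      linarith
    have hbS : ∀ S : Finset (Fin n),
        radNorm (fun j => T (fun _ => (∑ i ∈ S, a i) + ∑ i ∈ S, x j i)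
            - T (fun _ => (∑ i ∈ S, a i)))
          ≤ Cf S * weakNorm p (fun j => ∑ i ∈ S, x j i) ^ rf S := by
      intro S
      have hb1 := hbound S k (fun j => ∑ i ∈ S, x j i) (hzlt S)
      exact hb1
    have hne0 : (n.factorial : ℝ) ≠ 0 := Nat.cast_ne_zero.mpr n.factorial_ne_zero
    have hfam : (fun j : Fin k => (fun v : Fin n → E => T v) (a + x j) - (fun v => T v) a)
        = fun j : Fin k => ∑ S : Finset (Fin n), d S •
            (T (fun _ => (∑ i ∈ S, a i) + ∑ i ∈ S, x j i) - T (fun _ => (∑ i ∈ S, a i))) := by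
      funext j
      have h1 := polarization T hsym (a + x j)
      have h2 := polarization T hsym a
      have h1' : (n.factorial : ℝ) • T (a + x j)
          = ∑ S : Finset (Fin n), ((-1:ℝ)^(n - S.card)) •
              T (fun _ => (∑ i ∈ S, a i) + ∑ i ∈ S, x j i) := by
        rw [h1]
        refine Finset.sum_congr rfl fun S _ => ?_
        congr 1
        congr 1
        funext i0
        show ∑ i ∈ S, (a i + x j i) = (∑ i ∈ S, a i) + ∑ i ∈ S, x j i
        exact Finset.sum_add_distrib
      show T (a + x j) - T a = _
      calc T (a + x j) - T a
          = (n.factorial:ℝ)⁻¹ • ((n.factorial:ℝ) • (T (a + x j) - T a)) := by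
            rw [smul_smul, inv_mul_cancel₀ hne0, one_smul]
        _ = (n.factorial:ℝ)⁻¹ • ((∑ S : Finset (Fin n), ((-1:ℝ)^(n - S.card)) •
              T (fun _ => (∑ i ∈ S, a i) + ∑ i ∈ S, x j i))
            - ∑ S : Finset (Fin n), ((-1:ℝ)^(n - S.card)) • T (fun _ => ∑ i ∈ S, a i)) := by
            rw [smul_sub, h1', h2]
        _ = ∑ S : Finset (Fin n), d S •
              (T (fun _ => (∑ i ∈ S, a i) + ∑ i ∈ S, x j i) - T (fun _ => (∑ i ∈ S, a i))) := by
            rw [← Finset.sum_sub_distrib, Finset.smul_sum]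
            refine Finset.sum_congr rfl fun S _ => ?_
            rw [← smul_sub, smul_smul]
            congr 1
            rw [hd, inv_mul_eq_div]
    rw [hfam]
    have hcombo := radNorm_combo (ι := Finset (Fin n)) d
      (fun S (j : Fin k) => T (fun _ => (∑ i ∈ S, a i) + ∑ i ∈ S, x j i)
        - T (fun _ => (∑ i ∈ S, a i)))
    refine le_trans hcombo ?_
    have hterm : ∀ S : Finset (Fin n),
        radNorm (fun j : Fin k => T (fun _ => (∑ i ∈ S, a i) + ∑ i ∈ S, x j i)
            - T (fun _ => (∑ i ∈ S, a i)))
          ≤ Cf S * (((n:ℝ)+1)^R * w ^ r) := by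
      intro S
      refine le_trans (hbS S) ?_
      refine mul_le_mul_of_nonneg_left ?_ (hCf S).le
      calc weakNorm p (fun j => ∑ i ∈ S, x j i) ^ rf S ≤ ((n:ℝ) * w) ^ rf S :=
            pow_le_pow_left₀ (wn_nonneg _ _) (hzw S) _
        _ = (n:ℝ)^ rf S * w ^ rf S := mul_pow _ _ _
        _ ≤ ((n:ℝ)+1)^R * w ^ r := by
            refine mul_le_mul ?_ ?_ (by positivity) (by positivity)
            · calc (n:ℝ) ^ rf S ≤ ((n:ℝ)+1) ^ rf S :=
                  pow_le_pow_left₀ (by positivity) (by linarith) _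
                _ ≤ ((n:ℝ)+1)^R := by
                    refine pow_le_pow_right₀ (by push_cast; linarith) ?_
                    rw [hRdef]
                    exact Finset.le_sup' rf (Finset.mem_univ S)
            · refine pow_le_pow_of_le_one hw0 hw1 ?_
              rw [hrdef]
              exact Finset.inf'_le rf (Finset.mem_univ S)
    calc (∑ S : Finset (Fin n), (m * |d S|) *
          radNorm (fun j : Fin k => T (fun _ => (∑ i ∈ S, a i) + ∑ i ∈ S, x j i)
            - T (fun _ => (∑ i ∈ S, a i))))
        ≤ ∑ S : Finset (Fin n), (m * |d S|) * (Cf S * (((n:ℝ)+1)^R * w ^ r)) :=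
          Finset.sum_le_sum fun S _ => mul_le_mul_of_nonneg_left (hterm S)
            (mul_nonneg (by rw [hm]; exact Real.sqrt_nonneg _) (abs_nonneg _))
      _ = A * w ^ r := by
          rw [hA, Finset.sum_mul, Finset.sum_mul]
          refine Finset.sum_congr rfl fun S _ => by ring
      _ ≤ (A + 1) * w ^ r := mul_le_mul_of_nonneg_right (by linarith) (by positivity)
  · -- easy direction
    intro hT a
    obtain ⟨C, hC, ε, hε, r, hr, hb⟩ := hT (fun _ => a)
    refine ⟨C, hC, ε, hε, r, hr, ?_⟩
    intro k x hx
    have hXeq : (fun j : Fin k =>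
          (ContinuousLinearMap.pi (fun _ : Fin n => ContinuousLinearMap.id ℝ E) :
            E →L[ℝ] (Fin n → E)) (x j)) = fun j : Fin k => (fun _ : Fin n => x j) := by
      funext j; ext i; simp
    have hX : weakNorm p (fun j => (fun _ : Fin n => x j)) ≤ weakNorm p x := by
      rw [← hXeq]
      exact wn_comp hp0 x _ (diag_norm_le n)
    have h2 := hb k (fun j => fun _ => x j) (lt_of_le_of_lt hX hx)
    have hfam : (fun j => (fun v : Fin n → E => T v) ((fun _ : Fin n => a) + fun _ => x j)
          - (fun v : Fin n → E => T v) (fun _ : Fin n => a))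
        = (fun j : Fin k => (fun x => T fun _ => x) (a + x j) - (fun x => T fun _ => x) a) := by
      funext j; rfl
    rw [hfam] at h2
    calc radNorm (fun j => (fun x => T fun _ => x) (a + x j) - (fun x => T fun _ => x) a)
        ≤ C * weakNorm p (fun j => (fun _ : Fin n => x j)) ^ r := h2
      _ ≤ C * weakNorm p x ^ r := by
          refine mul_le_mul_of_nonneg_left ?_ hC.le
          exact pow_le_pow_left₀ (wn_nonneg _ _) hX r
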